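/- Let A¹x¹ + b¹y ≤ d¹ and A²x² + b²y ≤ d² be two systems of linear inequalities with integer data, each of which implies 0 ≤ y ≤ 1 and each of which defines an integral polyhedron. Then the combined system (both sets of inequalities, sharing the single variable y) also defines an integral polyhedron. -/

import Mathlib

/-- An element of `(Fin n → ℝ) × ℝ` is integral if all its coordinates are integers. -/
def IntPt1 {n : ℕ} (p : (Fin n → ℝ) × ℝ) : Prop :=
  (∀ i, ∃ k : ℤ, p.1 i = (k : ℝ)) ∧ ∃ k : ℤ, p.2 = (k : ℝ)

/-- Dickson-type pair extraction: a sequence of integer vectors bounded above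
componentwise contains a pair `k < l` with `v l ≤ v k` componentwise. -/
lemma dickson_pair {m : ℕ} (v : ℕ → Fin m → ℤ) (D : Fin m → ℤ)
    (hbd : ∀ k j, v k j ≤ D j) :
    ∃ k l : ℕ, k < l ∧ ∀ j, v l j ≤ v k j := by
  have hpwo : (Set.univ : Set (Fin m → ℕ)).IsPWO :=
    Set.isPWO_of_wellQuasiOrderedLE Set.univ
  obtain ⟨k, l, hkl, hle⟩ :=
    hpwo (fun k => ⟨fun j => (D j - v k j).toNat, Set.mem_univ _⟩)
  refine ⟨k, l, hkl, fun j => ?_⟩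
  have h1 := hle j
  have h2 := hbd k j
  have h3 := hbd l j
  simp only at h1
  omega

/-- Points of a convex hull of a set living on levels `y = 0` and `y = 1` satisfy the
affine bound interpolating level bounds. -/
lemma aff_bound {n : ℕ} (S : Set ((Fin n → ℝ) × ℝ))
    (hlv : ∀ s ∈ S, s.2 = 0 ∨ s.2 = 1)
    (ψ : (Fin n → ℝ) →L[ℝ] ℝ) (c₀ c₁ : ℝ)
    (h0 : ∀ s ∈ S, s.2 = 0 → ψ s.1 ≤ c₀)
    (h1 : ∀ s ∈ S, s.2 = 1 → ψ s.1 ≤ c₁)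
    {x : Fin n → ℝ} {y : ℝ} (hx : (x, y) ∈ closure (convexHull ℝ S)) :
    ψ x ≤ (1 - y) * c₀ + y * c₁ := by
  set g : ((Fin n → ℝ) × ℝ) →L[ℝ] ℝ :=
    ψ.comp (ContinuousLinearMap.fst ℝ _ _) + (c₀ - c₁) • ContinuousLinearMap.snd ℝ _ _ with hg
  have hgapp : ∀ q : (Fin n → ℝ) × ℝ, g q = ψ q.1 + (c₀ - c₁) * q.2 := by
    intro q; simp [hg]
  have hsub : S ⊆ {q | g q ≤ c₀} := by
    intro s hs
    rcases hlv s hs with h | h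
    · simp only [Set.mem_setOf_eq, hgapp, h, mul_zero, add_zero]
      exact h0 s hs h
    · simp only [Set.mem_setOf_eq, hgapp, h, mul_one]
      have := h1 s hs h
      linarith
  have hconv : Convex ℝ {q | g q ≤ c₀} :=
    convex_halfSpace_le ⟨g.map_add, g.map_smul⟩ c₀
  have hcl : IsClosed {q | g q ≤ c₀} := isClosed_le g.continuous continuous_const
  have hmem : (x, y) ∈ {q | g q ≤ c₀} :=
    (closure_minimal (convexHull_min hsub hconv) hcl) hx
  have := hmem
  rw [Set.mem_setOf_eq, hgapp] at this
  simp only at this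
  linarith

/-- Integer points of a polyhedron with `0 ≤ y ≤ 1` lie on levels `0` or `1`. -/
lemma levels01 {n : ℕ} (Pp : Set ((Fin n → ℝ) × ℝ))
    (hy : ∀ p ∈ Pp, 0 ≤ p.2 ∧ p.2 ≤ 1)
    {s : (Fin n → ℝ) × ℝ} (hsP : s ∈ Pp) (hsI : IntPt1 s) :
    s.2 = 0 ∨ s.2 = 1 := by
  obtain ⟨k, hk⟩ := hsI.2
  have h0 := (hy s hsP).1
  have h1 := (hy s hsP).2
  rw [hk] at h0 h1 ⊢
  have hk0 : (0 : ℤ) ≤ k := by exact_mod_cast h0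
  have hk1 : k ≤ 1 := by exact_mod_cast h1
  interval_cases k
  · left; norm_num
  · right; norm_num

/-- If there is no integer point at level `t`, then the whole polyhedron lies
at level `t'` (the other level). -/
lemma level_forced {n : ℕ} (Pp : Set ((Fin n → ℝ) × ℝ))
    (hy : ∀ p ∈ Pp, 0 ≤ p.2 ∧ p.2 ≤ 1)
    (hint : Pp = closure (convexHull ℝ {p ∈ Pp | IntPt1 p}))
    (t t' : ℝ) (h01 : (t = 0 ∧ t' = 1) ∨ (t = 1 ∧ t' = 0))
    (hempty : ¬ ∃ u : Fin n → ℝ, (u, t) ∈ Pp ∧ IntPt1 ((u, t) : (Fin n → ℝ) × ℝ)) :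
    ∀ p ∈ Pp, p.2 = t' := by
  have hS : {p ∈ Pp | IntPt1 p} ⊆ {q : (Fin n → ℝ) × ℝ | q.2 = t'} := by
    intro s hs
    obtain ⟨hsP, hsI⟩ := hs
    have hlv := levels01 Pp hy hsP hsI
    have hst : s.2 ≠ t := by
      intro h
      apply hempty
      refine ⟨s.1, ?_, ?_⟩
      · rw [← h]; exact hsP
      · rw [← h]; exact hsI
    rcases h01 with ⟨rfl, rfl⟩ | ⟨rfl, rfl⟩ <;> rcases hlv with h | h <;>
      first
        | (exact absurd h hst)
        | (exact h)
  have hconv : Convex ℝ {q : (Fin n → ℝ) × ℝ | q.2 = t'} :=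
    convex_hyperplane (⟨fun _ _ => rfl, fun _ _ => rfl⟩ : IsLinearMap ℝ
      (fun q : (Fin n → ℝ) × ℝ => q.2)) t'
  have hcl : IsClosed {q : (Fin n → ℝ) × ℝ | q.2 = t'} :=
    isClosed_eq continuous_snd continuous_const
  intro p hp
  have : Pp ⊆ {q : (Fin n → ℝ) × ℝ | q.2 = t'} := by
    rw [hint]
    exact closure_minimal (convexHull_min hS hconv) hcl
  exact this hp
/-- Face/boundary bound: if `(x, t)` lies in the integral polyhedron at an integer
level `t ∈ {0,1}` and `ψ` is bounded by `c` on integer points at level `t`,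
then `ψ x ≤ c`. -/
lemma face_bound {n m : ℕ} (A : Matrix (Fin m) (Fin n) ℤ) (b d : Fin m → ℤ)
    (Pp : Set ((Fin n → ℝ) × ℝ))
    (hPp : Pp = {p | ∀ j, (∑ i, (A j i : ℝ) * p.1 i) + (b j : ℝ) * p.2 ≤ (d j : ℝ)})
    (hy : ∀ p ∈ Pp, 0 ≤ p.2 ∧ p.2 ≤ 1)
    (hint : Pp = closure (convexHull ℝ {p ∈ Pp | IntPt1 p}))
    (ψ : (Fin n → ℝ) →L[ℝ] ℝ) (tz : ℤ) (ht : tz = 0 ∨ tz = 1)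
    {x : Fin n → ℝ} (hx : ((x, (tz : ℝ)) : (Fin n → ℝ) × ℝ) ∈ Pp) (c : ℝ)
    (hc : ∀ u : Fin n → ℝ, ((u, (tz : ℝ)) : (Fin n → ℝ) × ℝ) ∈ Pp →
      IntPt1 ((u, (tz : ℝ)) : (Fin n → ℝ) × ℝ) → ψ u ≤ c) :
    ψ x ≤ c := by
  set tz' : ℤ := 1 - tz with htz'
  by_cases hbdd : ∃ c₁ : ℝ, ∀ u : Fin n → ℝ, ((u, (tz' : ℝ)) : (Fin n → ℝ) × ℝ) ∈ Pp →
      IntPt1 ((u, (tz' : ℝ)) : (Fin n → ℝ) × ℝ) → ψ u ≤ c₁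
  · obtain ⟨c₁, hc₁⟩ := hbdd
    have hlv : ∀ s ∈ {p ∈ Pp | IntPt1 p}, s.2 = 0 ∨ s.2 = 1 :=
      fun s hs => levels01 Pp hy hs.1 hs.2
    have hxc : ((x, (tz : ℝ)) : (Fin n → ℝ) × ℝ) ∈
        closure (convexHull ℝ {p ∈ Pp | IntPt1 p}) := hint ▸ hx
    rcases ht with h | h
    · -- tz = 0, tz' = 1
      have h0 : ∀ s ∈ {p ∈ Pp | IntPt1 p}, s.2 = 0 → ψ s.1 ≤ c := by
        rintro ⟨su, sy⟩ hs hs2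
        simp only at hs2
        subst hs2
        have he : ((0 : ℝ)) = ((tz : ℤ) : ℝ) := by rw [h]; norm_num
        rw [he] at hs
        exact hc su hs.1 hs.2
      have h1 : ∀ s ∈ {p ∈ Pp | IntPt1 p}, s.2 = 1 → ψ s.1 ≤ c₁ := by
        rintro ⟨su, sy⟩ hs hs2
        simp only at hs2
        subst hs2
        have he : ((1 : ℝ)) = ((tz' : ℤ) : ℝ) := by rw [htz', h]; norm_num
        rw [he] at hs
        exact hc₁ su hs.1 hs.2
      have := aff_bound _ hlv ψ c c₁ h0 h1 hxc
      rw [h] at this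
      norm_num at this
      exact this
    · -- tz = 1, tz' = 0
      have h0 : ∀ s ∈ {p ∈ Pp | IntPt1 p}, s.2 = 0 → ψ s.1 ≤ c₁ := by
        rintro ⟨su, sy⟩ hs hs2
        simp only at hs2
        subst hs2
        have he : ((0 : ℝ)) = ((tz' : ℤ) : ℝ) := by rw [htz', h]; norm_num
        rw [he] at hs
        exact hc₁ su hs.1 hs.2
      have h1 : ∀ s ∈ {p ∈ Pp | IntPt1 p}, s.2 = 1 → ψ s.1 ≤ c := by
        rintro ⟨su, sy⟩ hs hs2
        simp only at hs2
        subst hs2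
        have he : ((1 : ℝ)) = ((tz : ℤ) : ℝ) := by rw [h]; norm_num
        rw [he] at hs
        exact hc su hs.1 hs.2
      have := aff_bound _ hlv ψ c₁ c h0 h1 hxc
      rw [h] at this
      norm_num at this
      exact this
  · -- ψ is unbounded on integer points at the other level: contradiction with `hc`.
    exfalso
    push_neg at hbdd
    -- a point of the polyhedron at level tz with integer coordinates
    have hx0 : ∃ u : Fin n → ℝ, ((u, (tz : ℝ)) : (Fin n → ℝ) × ℝ) ∈ Pp ∧
        IntPt1 ((u, (tz : ℝ)) : (Fin n → ℝ) × ℝ) := by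
      by_contra hem
      have h01 : (((tz : ℝ)) = 0 ∧ ((tz' : ℝ)) = 1) ∨
          (((tz : ℝ)) = 1 ∧ ((tz' : ℝ)) = 0) := by
        rcases ht with h | h
        · left; constructor <;> simp [h, htz']
        · right; constructor <;> simp [h, htz']
      have heq := level_forced Pp hy hint ((tz : ℝ)) ((tz' : ℝ)) h01 hem
        ((x, (tz : ℝ))) hx
      simp only at heq
      have : tz = tz' := by exact_mod_cast heq
      omega
    obtain ⟨u₀, hu₀P, hu₀I⟩ := hx0
    choose F hFP hFI hFgt using hbdd
    set u : ℕ → (Fin n → ℝ) := fun k => Nat.rec (F 0) (fun _ prev => F (ψ prev)) k with hu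
    have hmono : StrictMono fun k => ψ (u k) :=
      strictMono_nat_of_lt_succ (fun k => hFgt (ψ (u k)))
    have huP : ∀ k, ((u k, (tz' : ℝ)) : (Fin n → ℝ) × ℝ) ∈ Pp := by
      intro k
      cases k with
      | zero => exact hFP 0
      | succ k => exact hFP _
    have huI : ∀ k, IntPt1 ((u k, (tz' : ℝ)) : (Fin n → ℝ) × ℝ) := by
      intro k
      cases k with
      | zero => exact hFI 0
      | succ k => exact hFI _
    have hZe : ∀ k i, ∃ z : ℤ, u k i = (z : ℝ) := fun k i => (huI k).1 i
    choose Z hZ using hZe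
    set w : ℕ → Fin m → ℤ := fun k j => ∑ i, A j i * Z k i with hw
    have hwc : ∀ k j, ((w k j : ℤ) : ℝ) = ∑ i, (A j i : ℝ) * u k i := by
      intro k j
      have h1 : ((w k j : ℤ) : ℝ) = ∑ i, (A j i : ℝ) * (Z k i : ℝ) := by
        simp only [hw]
        push_cast
        rfl
      rw [h1]
      exact Finset.sum_congr rfl fun i _ => by rw [hZ k i]
    have hwle : ∀ k j, w k j ≤ d j - b j * tz' := by
      intro k j
      have hm := huP k
      rw [hPp] at hm
      have hmj := hm j
      simp only [Set.mem_setOf_eq] at hmj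
      have : ((w k j : ℤ) : ℝ) ≤ ((d j - b j * tz' : ℤ) : ℝ) := by
        rw [hwc k j]
        push_cast
        linarith
      exact_mod_cast this
    obtain ⟨k, l, hkl, hwd⟩ := dickson_pair w _ hwle
    set r : Fin n → ℝ := u l - u k with hr
    have hψr : 0 < ψ r := by
      have hlt := hmono hkl
      simp only at hlt
      rw [hr, map_sub]
      linarith
    have hAr : ∀ j, (∑ i, (A j i : ℝ) * r i) ≤ 0 := by
      intro j
      have h1 : ((w l j : ℤ) : ℝ) - ((w k j : ℤ) : ℝ) ≤ 0 := by
        have := hwd j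
        have : ((w l j : ℤ) : ℝ) ≤ ((w k j : ℤ) : ℝ) := by exact_mod_cast this
        linarith
      have h2 : ∑ i, (A j i : ℝ) * r i = ((w l j : ℤ) : ℝ) - ((w k j : ℤ) : ℝ) := by
        rw [hwc l j, hwc k j, ← Finset.sum_sub_distrib]
        refine Finset.sum_congr rfl fun i _ => ?_
        rw [hr]
        simp [mul_sub]
      linarith
    obtain ⟨N, hN⟩ := exists_nat_gt ((c - ψ u₀) / ψ r)
    set z : Fin n → ℝ := fun i => u₀ i + (N : ℝ) * r i with hz
    have hzP : ((z, (tz : ℝ)) : (Fin n → ℝ) × ℝ) ∈ Pp := by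
      rw [hPp]
      intro j
      simp only [Set.mem_setOf_eq]
      have hbase : (∑ i, (A j i : ℝ) * u₀ i) + (b j : ℝ) * (tz : ℝ) ≤ (d j : ℝ) := by
        have hm := hu₀P
        rw [hPp] at hm
        exact hm j
      have hsum : ∑ i, (A j i : ℝ) * z i =
          (∑ i, (A j i : ℝ) * u₀ i) + (N : ℝ) * ∑ i, (A j i : ℝ) * r i := by
        rw [Finset.mul_sum, ← Finset.sum_add_distrib]
        refine Finset.sum_congr rfl fun i _ => ?_
        simp only [hz]
        ring
      have hneg : (N : ℝ) * (∑ i, (A j i : ℝ) * r i) ≤ 0 :=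
        mul_nonpos_of_nonneg_of_nonpos (Nat.cast_nonneg N) (hAr j)
      rw [hsum]
      linarith
    have hzI : IntPt1 ((z, (tz : ℝ)) : (Fin n → ℝ) × ℝ) := by
      refine ⟨fun i => ?_, ⟨tz, rfl⟩⟩
      obtain ⟨z0, hz0⟩ := hu₀I.1 i
      refine ⟨z0 + (N : ℤ) * (Z l i - Z k i), ?_⟩
      simp only [hz, hr, Pi.sub_apply] at *
      rw [hz0, hZ l i, hZ k i]
      push_cast
      ring
    have hle := hc z hzP hzI
    have hψz : ψ z = ψ u₀ + (N : ℝ) * ψ r := by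
      have hzd : z = u₀ + (N : ℝ) • r := by
        funext i
        simp [hz]
      rw [hzd, map_add, map_smul]
      simp
    have hNr : c - ψ u₀ < (N : ℝ) * ψ r := by
      rwa [div_lt_iff₀ hψr] at hN
    rw [hψz] at hle
    linarith

/-- An element of `(Fin n₁ → ℝ) × (Fin n₂ → ℝ) × ℝ` is integral if all its coordinates
are integers. -/
def IntPt2 {n₁ n₂ : ℕ} (p : (Fin n₁ → ℝ) × (Fin n₂ → ℝ) × ℝ) : Prop :=
  (∀ i, ∃ k : ℤ, p.1 i = (k : ℝ)) ∧ (∀ i, ∃ k : ℤ, p.2.1 i = (k : ℝ)) ∧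
    ∃ k : ℤ, p.2.2 = (k : ℝ)

lemma lin_row {n : ℕ} (a : Fin n → ℝ) (b : ℝ) :
    IsLinearMap ℝ (fun p : (Fin n → ℝ) × ℝ => (∑ i, a i * p.1 i) + b * p.2) := by
  constructor
  · intro q r
    simp only [Prod.fst_add, Prod.snd_add, Pi.add_apply, mul_add, Finset.sum_add_distrib]
    ring
  · intro c q
    simp only [Prod.smul_fst, Prod.smul_snd, Pi.smul_apply, smul_eq_mul]
    rw [mul_add, Finset.mul_sum]
    congr 1
    · exact Finset.sum_congr rfl fun i _ => by ring
    · ring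

lemma poly_closed {n m : ℕ} (A : Matrix (Fin m) (Fin n) ℤ) (b d : Fin m → ℤ) :
    IsClosed {p : (Fin n → ℝ) × ℝ |
      ∀ j, (∑ i, (A j i : ℝ) * p.1 i) + (b j : ℝ) * p.2 ≤ (d j : ℝ)} := by
  have he : {p : (Fin n → ℝ) × ℝ |
      ∀ j, (∑ i, (A j i : ℝ) * p.1 i) + (b j : ℝ) * p.2 ≤ (d j : ℝ)}
      = ⋂ j, {p : (Fin n → ℝ) × ℝ |
        (∑ i, (A j i : ℝ) * p.1 i) + (b j : ℝ) * p.2 ≤ (d j : ℝ)} := by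
    ext q; simp [Set.mem_iInter]
  rw [he]
  refine isClosed_iInter fun j => isClosed_le ?_ continuous_const
  refine Continuous.add ?_ (continuous_const.mul continuous_snd)
  exact continuous_finset_sum _ fun i _ =>
    continuous_const.mul ((continuous_apply i).comp continuous_fst)

lemma poly_convex {n m : ℕ} (A : Matrix (Fin m) (Fin n) ℤ) (b d : Fin m → ℤ) :
    Convex ℝ {p : (Fin n → ℝ) × ℝ |
      ∀ j, (∑ i, (A j i : ℝ) * p.1 i) + (b j : ℝ) * p.2 ≤ (d j : ℝ)} := by
  have he : {p : (Fin n → ℝ) × ℝ |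
      ∀ j, (∑ i, (A j i : ℝ) * p.1 i) + (b j : ℝ) * p.2 ≤ (d j : ℝ)}
      = ⋂ j, {p : (Fin n → ℝ) × ℝ |
        (∑ i, (A j i : ℝ) * p.1 i) + (b j : ℝ) * p.2 ≤ (d j : ℝ)} := by
    ext q; simp [Set.mem_iInter]
  rw [he]
  exact convex_iInter fun j => convex_halfSpace_le (lin_row _ _) _

theorem stmt2 (n₁ n₂ m₁ m₂ : ℕ)
    (A₁ : Matrix (Fin m₁) (Fin n₁) ℤ) (b₁ d₁ : Fin m₁ → ℤ)
    (A₂ : Matrix (Fin m₂) (Fin n₂) ℤ) (b₂ d₂ : Fin m₂ → ℤ)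
    (P₁ : Set ((Fin n₁ → ℝ) × ℝ)) (P₂ : Set ((Fin n₂ → ℝ) × ℝ))
    (hP₁ : P₁ = {p | ∀ j, (∑ i, (A₁ j i : ℝ) * p.1 i) + (b₁ j : ℝ) * p.2 ≤ (d₁ j : ℝ)})
    (hP₂ : P₂ = {p | ∀ j, (∑ i, (A₂ j i : ℝ) * p.1 i) + (b₂ j : ℝ) * p.2 ≤ (d₂ j : ℝ)})
    (hy₁ : ∀ p ∈ P₁, 0 ≤ p.2 ∧ p.2 ≤ 1)
    (hy₂ : ∀ p ∈ P₂, 0 ≤ p.2 ∧ p.2 ≤ 1)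
    (hint₁ : P₁ = closure (convexHull ℝ {p ∈ P₁ | IntPt1 p}))
    (hint₂ : P₂ = closure (convexHull ℝ {p ∈ P₂ | IntPt1 p}))
    (P : Set ((Fin n₁ → ℝ) × (Fin n₂ → ℝ) × ℝ))
    (hP : P = {p | (p.1, p.2.2) ∈ P₁ ∧ (p.2.1, p.2.2) ∈ P₂}) :
    P = closure (convexHull ℝ {p ∈ P | IntPt2 p}) := by
  have hP₁closed : IsClosed P₁ := hP₁ ▸ poly_closed A₁ b₁ d₁
  have hP₂closed : IsClosed P₂ := hP₂ ▸ poly_closed A₂ b₂ d₂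
  have hP₁conv : Convex ℝ P₁ := hP₁ ▸ poly_convex A₁ b₁ d₁
  have hP₂conv : Convex ℝ P₂ := hP₂ ▸ poly_convex A₂ b₂ d₂
  have hPdecomp : P = (fun q : (Fin n₁ → ℝ) × (Fin n₂ → ℝ) × ℝ => (q.1, q.2.2)) ⁻¹' P₁ ∩
      (fun q : (Fin n₁ → ℝ) × (Fin n₂ → ℝ) × ℝ => (q.2.1, q.2.2)) ⁻¹' P₂ := by
    rw [hP]; rfl
  have hPclosed : IsClosed P := by
    rw [hPdecomp]
    exact (hP₁closed.preimage
        (continuous_fst.prodMk (continuous_snd.comp continuous_snd))).inter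
      (hP₂closed.preimage
        ((continuous_fst.comp continuous_snd).prodMk (continuous_snd.comp continuous_snd)))
  have hPconv : Convex ℝ P := by
    rw [hPdecomp]
    exact (hP₁conv.is_linear_preimage ⟨fun _ _ => rfl, fun _ _ => rfl⟩).inter
      (hP₂conv.is_linear_preimage ⟨fun _ _ => rfl, fun _ _ => rfl⟩)
  apply Set.Subset.antisymm
  · -- hard direction
    intro p hp
    by_contra hpc
    obtain ⟨f, δ, hfs, hfp⟩ := geometric_hahn_banach_closed_point
      ((convex_convexHull ℝ _).closure) isClosed_closure hpc
    set ψ₁ : (Fin n₁ → ℝ) →L[ℝ] ℝ :=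
      f.comp (ContinuousLinearMap.inl ℝ (Fin n₁ → ℝ) ((Fin n₂ → ℝ) × ℝ)) with hψ₁
    set ψ₂ : (Fin n₂ → ℝ) →L[ℝ] ℝ :=
      f.comp ((ContinuousLinearMap.inr ℝ (Fin n₁ → ℝ) ((Fin n₂ → ℝ) × ℝ)).comp
        (ContinuousLinearMap.inl ℝ (Fin n₂ → ℝ) ℝ)) with hψ₂
    set γ : ℝ := f (0, 0, 1) with hγ
    have hsplit : ∀ (a : Fin n₁ → ℝ) (v : Fin n₂ → ℝ) (yy : ℝ),
        f (a, v, yy) = ψ₁ a + ψ₂ v + yy * γ := by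
      intro a v yy
      have h1 : ((a, v, yy) : (Fin n₁ → ℝ) × (Fin n₂ → ℝ) × ℝ)
          = (a, (0 : Fin n₂ → ℝ), (0 : ℝ)) + ((0 : Fin n₁ → ℝ), v, (0 : ℝ))
            + ((0 : Fin n₁ → ℝ), (0 : Fin n₂ → ℝ), yy) := by
        simp [Prod.ext_iff]
      rw [h1, map_add, map_add]
      have h2 : (((0 : Fin n₁ → ℝ), (0 : Fin n₂ → ℝ), yy) : (Fin n₁ → ℝ) × (Fin n₂ → ℝ) × ℝ)
          = yy • ((0 : Fin n₁ → ℝ), (0 : Fin n₂ → ℝ), (1 : ℝ)) := by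
        simp [Prod.ext_iff]
      rw [h2, map_smul]
      simp only [hψ₁, hψ₂, hγ, ContinuousLinearMap.comp_apply,
        ContinuousLinearMap.inl_apply, ContinuousLinearMap.inr_apply,
        Prod.mk_zero_zero, smul_eq_mul]
    have hkey : ∀ (tt : ℝ) (uu : Fin n₁ → ℝ) (vv : Fin n₂ → ℝ),
        ((uu, tt) : (Fin n₁ → ℝ) × ℝ) ∈ P₁ → IntPt1 ((uu, tt) : (Fin n₁ → ℝ) × ℝ) →
        ((vv, tt) : (Fin n₂ → ℝ) × ℝ) ∈ P₂ → IntPt1 ((vv, tt) : (Fin n₂ → ℝ) × ℝ) →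
        ψ₁ uu + ψ₂ vv + tt * γ ≤ δ := by
      intro tt uu vv h1 h2 h3 h4
      have hmem : ((uu, vv, tt) : (Fin n₁ → ℝ) × (Fin n₂ → ℝ) × ℝ) ∈ {q ∈ P | IntPt2 q} := by
        refine ⟨?_, ?_⟩
        · rw [hP]; exact ⟨h1, h3⟩
        · exact ⟨h2.1, h4.1, h2.2⟩
      have hlt := hfs _ (subset_closure (subset_convexHull ℝ _ hmem))
      rw [hsplit] at hlt
      linarith
    have hp' := hp
    rw [hP] at hp'
    obtain ⟨hp1, hp2⟩ := hp'
    have h0y : (0 : ℝ) ≤ p.2.2 := (hy₁ _ hp1).1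
    have h1y : p.2.2 ≤ 1 := (hy₁ _ hp1).2
    have hfpe : f p = ψ₁ p.1 + ψ₂ p.2.1 + p.2.2 * γ := hsplit p.1 p.2.1 p.2.2
    rw [hfpe] at hfp
    -- nonemptiness of integer slices
    have hslice₁ : ∀ tz : ℤ, tz = 0 ∨ tz = 1 → p.2.2 ≠ 1 - (tz : ℝ) →
        ∃ u : Fin n₁ → ℝ, ((u, (tz : ℝ)) : (Fin n₁ → ℝ) × ℝ) ∈ P₁ ∧
          IntPt1 ((u, (tz : ℝ)) : (Fin n₁ → ℝ) × ℝ) := by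
      intro tz htz hne
      by_contra hem
      have h01 : (((tz : ℝ)) = 0 ∧ (1 - (tz : ℝ)) = 1) ∨
          (((tz : ℝ)) = 1 ∧ (1 - (tz : ℝ)) = 0) := by
        rcases htz with h | h
        · left; constructor <;> simp [h]
        · right; constructor <;> simp [h]
      exact hne (level_forced P₁ hy₁ hint₁ _ _ h01 hem (p.1, p.2.2) hp1)
    have hslice₂ : ∀ tz : ℤ, tz = 0 ∨ tz = 1 → p.2.2 ≠ 1 - (tz : ℝ) →
        ∃ v : Fin n₂ → ℝ, ((v, (tz : ℝ)) : (Fin n₂ → ℝ) × ℝ) ∈ P₂ ∧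
          IntPt1 ((v, (tz : ℝ)) : (Fin n₂ → ℝ) × ℝ) := by
      intro tz htz hne
      by_contra hem
      have h01 : (((tz : ℝ)) = 0 ∧ (1 - (tz : ℝ)) = 1) ∨
          (((tz : ℝ)) = 1 ∧ (1 - (tz : ℝ)) = 0) := by
        rcases htz with h | h
        · left; constructor <;> simp [h]
        · right; constructor <;> simp [h]
      exact hne (level_forced P₂ hy₂ hint₂ _ _ h01 hem (p.2.1, p.2.2) hp2)
    rcases eq_or_lt_of_le h0y with hy0 | hy0pos
    · -- case y = 0
      have hne : p.2.2 ≠ 1 - ((0 : ℤ) : ℝ) := by rw [← hy0]; norm_num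
      obtain ⟨u₀, hu₀P, hu₀I⟩ := hslice₁ 0 (Or.inl rfl) hne
      obtain ⟨v₀, hv₀P, hv₀I⟩ := hslice₂ 0 (Or.inl rfl) hne
      set T₂ : Set ℝ := ψ₂ '' {v : Fin n₂ → ℝ |
        ((v, ((0 : ℤ) : ℝ)) : (Fin n₂ → ℝ) × ℝ) ∈ P₂ ∧
          IntPt1 ((v, ((0 : ℤ) : ℝ)) : (Fin n₂ → ℝ) × ℝ)} with hT₂
      have hT₂ne : T₂.Nonempty := ⟨ψ₂ v₀, v₀, ⟨hv₀P, hv₀I⟩, rfl⟩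
      have hT₂bdd : BddAbove T₂ := by
        refine ⟨δ - ψ₁ u₀, ?_⟩
        rintro _ ⟨v, ⟨hvP, hvI⟩, rfl⟩
        have := hkey _ u₀ v hu₀P hu₀I hvP hvI
        push_cast at this
        linarith
      set c₂ : ℝ := sSup T₂ with hc₂
      have hx2 : ((p.2.1, ((0 : ℤ) : ℝ)) : (Fin n₂ → ℝ) × ℝ) ∈ P₂ := by
        rw [show (((0 : ℤ) : ℝ)) = p.2.2 by rw [← hy0]; norm_num]
        exact hp2
      have hx1 : ((p.1, ((0 : ℤ) : ℝ)) : (Fin n₁ → ℝ) × ℝ) ∈ P₁ := by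
        rw [show (((0 : ℤ) : ℝ)) = p.2.2 by rw [← hy0]; norm_num]
        exact hp1
      have hb2 : ψ₂ p.2.1 ≤ c₂ :=
        face_bound A₂ b₂ d₂ P₂ hP₂ hy₂ hint₂ ψ₂ 0 (Or.inl rfl) hx2 c₂
          (fun v hvP hvI => le_csSup hT₂bdd ⟨v, ⟨hvP, hvI⟩, rfl⟩)
      have hb1 : ψ₁ p.1 ≤ δ - c₂ := by
        refine face_bound A₁ b₁ d₁ P₁ hP₁ hy₁ hint₁ ψ₁ 0 (Or.inl rfl) hx1 (δ - c₂) ?_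
        intro u huP huI
        have hcs : c₂ ≤ δ - ψ₁ u := by
          refine csSup_le hT₂ne ?_
          rintro _ ⟨v, ⟨hvP, hvI⟩, rfl⟩
          have := hkey _ u v huP huI hvP hvI
          push_cast at this
          linarith
        linarith
      rw [← hy0] at hfp
      rw [zero_mul, add_zero] at hfp
      linarith
    · rcases eq_or_lt_of_le h1y with hy1 | hy1lt
      · -- case y = 1
        have hne : p.2.2 ≠ 1 - ((1 : ℤ) : ℝ) := by rw [hy1]; norm_num
        obtain ⟨u₀, hu₀P, hu₀I⟩ := hslice₁ 1 (Or.inr rfl) hne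
        obtain ⟨v₀, hv₀P, hv₀I⟩ := hslice₂ 1 (Or.inr rfl) hne
        set T₂ : Set ℝ := ψ₂ '' {v : Fin n₂ → ℝ |
          ((v, ((1 : ℤ) : ℝ)) : (Fin n₂ → ℝ) × ℝ) ∈ P₂ ∧
            IntPt1 ((v, ((1 : ℤ) : ℝ)) : (Fin n₂ → ℝ) × ℝ)} with hT₂
        have hT₂ne : T₂.Nonempty := ⟨ψ₂ v₀, v₀, ⟨hv₀P, hv₀I⟩, rfl⟩
        have hT₂bdd : BddAbove T₂ := by
          refine ⟨δ - γ - ψ₁ u₀, ?_⟩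
          rintro _ ⟨v, ⟨hvP, hvI⟩, rfl⟩
          have := hkey _ u₀ v hu₀P hu₀I hvP hvI
          push_cast at this
          linarith
        set c₂ : ℝ := sSup T₂ with hc₂
        have hx2 : ((p.2.1, ((1 : ℤ) : ℝ)) : (Fin n₂ → ℝ) × ℝ) ∈ P₂ := by
          rw [show (((1 : ℤ) : ℝ)) = p.2.2 by rw [hy1]; norm_num]
          exact hp2
        have hx1 : ((p.1, ((1 : ℤ) : ℝ)) : (Fin n₁ → ℝ) × ℝ) ∈ P₁ := by
          rw [show (((1 : ℤ) : ℝ)) = p.2.2 by rw [hy1]; norm_num]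
          exact hp1
        have hb2 : ψ₂ p.2.1 ≤ c₂ :=
          face_bound A₂ b₂ d₂ P₂ hP₂ hy₂ hint₂ ψ₂ 1 (Or.inr rfl) hx2 c₂
            (fun v hvP hvI => le_csSup hT₂bdd ⟨v, ⟨hvP, hvI⟩, rfl⟩)
        have hb1 : ψ₁ p.1 ≤ δ - γ - c₂ := by
          refine face_bound A₁ b₁ d₁ P₁ hP₁ hy₁ hint₁ ψ₁ 1 (Or.inr rfl) hx1 (δ - γ - c₂) ?_
          intro u huP huI
          have hcs : c₂ ≤ δ - γ - ψ₁ u := by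
            refine csSup_le hT₂ne ?_
            rintro _ ⟨v, ⟨hvP, hvI⟩, rfl⟩
            have := hkey _ u v huP huI hvP hvI
            push_cast at this
            linarith
          linarith
        rw [hy1, one_mul] at hfp
        linarith
      · -- case 0 < y < 1
        have hne0 : p.2.2 ≠ 1 - ((0 : ℤ) : ℝ) := by push_cast; linarith
        have hne1 : p.2.2 ≠ 1 - ((1 : ℤ) : ℝ) := by push_cast; linarith
        obtain ⟨u₀, hu₀P, hu₀I⟩ := hslice₁ 0 (Or.inl rfl) hne0
        obtain ⟨v₀, hv₀P, hv₀I⟩ := hslice₂ 0 (Or.inl rfl) hne0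
        obtain ⟨u₁, hu₁P, hu₁I⟩ := hslice₁ 1 (Or.inr rfl) hne1
        obtain ⟨v₁, hv₁P, hv₁I⟩ := hslice₂ 1 (Or.inr rfl) hne1
        have hz0 : ((0 : ℤ) : ℝ) = (0 : ℝ) := by norm_num
        have hz1 : ((1 : ℤ) : ℝ) = (1 : ℝ) := by norm_num
        rw [hz0] at hu₀P hu₀I hv₀P hv₀I
        rw [hz1] at hu₁P hu₁I hv₁P hv₁I
        set S₁ : Set ((Fin n₁ → ℝ) × ℝ) := {q ∈ P₁ | IntPt1 q} with hS₁
        set S₂ : Set ((Fin n₂ → ℝ) × ℝ) := {q ∈ P₂ | IntPt1 q} with hS₂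
        set U₀ : Set ℝ := ψ₁ '' {u : Fin n₁ → ℝ |
          ((u, (0 : ℝ)) : (Fin n₁ → ℝ) × ℝ) ∈ P₁ ∧ IntPt1 ((u, (0 : ℝ)) : (Fin n₁ → ℝ) × ℝ)}
        set U₁ : Set ℝ := ψ₁ '' {u : Fin n₁ → ℝ |
          ((u, (1 : ℝ)) : (Fin n₁ → ℝ) × ℝ) ∈ P₁ ∧ IntPt1 ((u, (1 : ℝ)) : (Fin n₁ → ℝ) × ℝ)}
        set V₀ : Set ℝ := ψ₂ '' {v : Fin n₂ → ℝ |
          ((v, (0 : ℝ)) : (Fin n₂ → ℝ) × ℝ) ∈ P₂ ∧ IntPt1 ((v, (0 : ℝ)) : (Fin n₂ → ℝ) × ℝ)}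
        set V₁ : Set ℝ := ψ₂ '' {v : Fin n₂ → ℝ |
          ((v, (1 : ℝ)) : (Fin n₂ → ℝ) × ℝ) ∈ P₂ ∧ IntPt1 ((v, (1 : ℝ)) : (Fin n₂ → ℝ) × ℝ)}
        have hU₀ne : U₀.Nonempty := ⟨ψ₁ u₀, u₀, ⟨hu₀P, hu₀I⟩, rfl⟩
        have hU₁ne : U₁.Nonempty := ⟨ψ₁ u₁, u₁, ⟨hu₁P, hu₁I⟩, rfl⟩
        have hV₀ne : V₀.Nonempty := ⟨ψ₂ v₀, v₀, ⟨hv₀P, hv₀I⟩, rfl⟩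
        have hV₁ne : V₁.Nonempty := ⟨ψ₂ v₁, v₁, ⟨hv₁P, hv₁I⟩, rfl⟩
        have hkey0 : ∀ (uu : Fin n₁ → ℝ) (vv : Fin n₂ → ℝ),
            ((uu, (0:ℝ)) : (Fin n₁ → ℝ) × ℝ) ∈ P₁ → IntPt1 ((uu, (0:ℝ)) : (Fin n₁ → ℝ) × ℝ) →
            ((vv, (0:ℝ)) : (Fin n₂ → ℝ) × ℝ) ∈ P₂ → IntPt1 ((vv, (0:ℝ)) : (Fin n₂ → ℝ) × ℝ) →
            ψ₁ uu + ψ₂ vv ≤ δ := by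
          intro uu vv h1 h2 h3 h4
          have := hkey 0 uu vv h1 h2 h3 h4
          linarith
        have hkey1 : ∀ (uu : Fin n₁ → ℝ) (vv : Fin n₂ → ℝ),
            ((uu, (1:ℝ)) : (Fin n₁ → ℝ) × ℝ) ∈ P₁ → IntPt1 ((uu, (1:ℝ)) : (Fin n₁ → ℝ) × ℝ) →
            ((vv, (1:ℝ)) : (Fin n₂ → ℝ) × ℝ) ∈ P₂ → IntPt1 ((vv, (1:ℝ)) : (Fin n₂ → ℝ) × ℝ) →
            ψ₁ uu + ψ₂ vv + γ ≤ δ := by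
          intro uu vv h1 h2 h3 h4
          have := hkey 1 uu vv h1 h2 h3 h4
          linarith
        have hU₀bdd : BddAbove U₀ := by
          refine ⟨δ - ψ₂ v₀, ?_⟩
          rintro _ ⟨u, ⟨huP, huI⟩, rfl⟩
          have := hkey0 u v₀ huP huI hv₀P hv₀I
          linarith
        have hU₁bdd : BddAbove U₁ := by
          refine ⟨δ - γ - ψ₂ v₁, ?_⟩
          rintro _ ⟨u, ⟨huP, huI⟩, rfl⟩
          have := hkey1 u v₁ huP huI hv₁P hv₁I
          linarith
        have hV₀bdd : BddAbove V₀ := by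
          refine ⟨δ - ψ₁ u₀, ?_⟩
          rintro _ ⟨v, ⟨hvP, hvI⟩, rfl⟩
          have := hkey0 u₀ v hu₀P hu₀I hvP hvI
          linarith
        have hV₁bdd : BddAbove V₁ := by
          refine ⟨δ - γ - ψ₁ u₁, ?_⟩
          rintro _ ⟨v, ⟨hvP, hvI⟩, rfl⟩
          have := hkey1 u₁ v hu₁P hu₁I hvP hvI
          linarith
        set σ₁₀ : ℝ := sSup U₀
        set σ₁₁ : ℝ := sSup U₁
        set σ₂₀ : ℝ := sSup V₀
        set σ₂₁ : ℝ := sSup V₁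
        have hlv₁ : ∀ s ∈ S₁, s.2 = 0 ∨ s.2 = 1 := fun s hs => levels01 P₁ hy₁ hs.1 hs.2
        have hlv₂ : ∀ s ∈ S₂, s.2 = 0 ∨ s.2 = 1 := fun s hs => levels01 P₂ hy₂ hs.1 hs.2
        have hb1 : ψ₁ p.1 ≤ (1 - p.2.2) * σ₁₀ + p.2.2 * σ₁₁ := by
          refine aff_bound S₁ hlv₁ ψ₁ σ₁₀ σ₁₁ ?_ ?_ ?_
          · rintro ⟨su, sy⟩ hs hs2
            simp only at hs2
            subst hs2
            exact le_csSup hU₀bdd ⟨su, ⟨hs.1, hs.2⟩, rfl⟩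
          · rintro ⟨su, sy⟩ hs hs2
            simp only at hs2
            subst hs2
            exact le_csSup hU₁bdd ⟨su, ⟨hs.1, hs.2⟩, rfl⟩
          · rw [← hint₁]; exact hp1
        have hb2 : ψ₂ p.2.1 ≤ (1 - p.2.2) * σ₂₀ + p.2.2 * σ₂₁ := by
          refine aff_bound S₂ hlv₂ ψ₂ σ₂₀ σ₂₁ ?_ ?_ ?_
          · rintro ⟨su, sy⟩ hs hs2
            simp only at hs2
            subst hs2
            exact le_csSup hV₀bdd ⟨su, ⟨hs.1, hs.2⟩, rfl⟩
          · rintro ⟨su, sy⟩ hs hs2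
            simp only at hs2
            subst hs2
            exact le_csSup hV₁bdd ⟨su, ⟨hs.1, hs.2⟩, rfl⟩
          · rw [← hint₂]; exact hp2
        have h00 : σ₁₀ + σ₂₀ ≤ δ := by
          have : σ₁₀ ≤ δ - σ₂₀ := by
            refine csSup_le hU₀ne ?_
            rintro _ ⟨u, ⟨huP, huI⟩, rfl⟩
            have : σ₂₀ ≤ δ - ψ₁ u := by
              refine csSup_le hV₀ne ?_
              rintro _ ⟨v, ⟨hvP, hvI⟩, rfl⟩
              have := hkey0 u v huP huI hvP hvI
              linarith
            linarith
          linarith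
        have h11 : σ₁₁ + σ₂₁ + γ ≤ δ := by
          have : σ₁₁ ≤ δ - γ - σ₂₁ := by
            refine csSup_le hU₁ne ?_
            rintro _ ⟨u, ⟨huP, huI⟩, rfl⟩
            have : σ₂₁ ≤ δ - γ - ψ₁ u := by
              refine csSup_le hV₁ne ?_
              rintro _ ⟨v, ⟨hvP, hvI⟩, rfl⟩
              have := hkey1 u v huP huI hvP hvI
              linarith
            linarith
          linarith
        have e1 : (1 - p.2.2) * (σ₁₀ + σ₂₀) ≤ (1 - p.2.2) * δ :=
          mul_le_mul_of_nonneg_left h00 (by linarith)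
        have e2 : p.2.2 * (σ₁₁ + σ₂₁ + γ) ≤ p.2.2 * δ :=
          mul_le_mul_of_nonneg_left h11 (le_of_lt hy0pos)
        have hexp : (1 - p.2.2) * (σ₁₀ + σ₂₀) + p.2.2 * (σ₁₁ + σ₂₁ + γ)
            = ((1 - p.2.2) * σ₁₀ + p.2.2 * σ₁₁) + ((1 - p.2.2) * σ₂₀ + p.2.2 * σ₂₁)
              + p.2.2 * γ := by ring
        have hdd : (1 - p.2.2) * δ + p.2.2 * δ = δ := by ring
        linarith
  · exact closure_minimal (convexHull_min (fun q hq => hq.1) hPconv) hPclosed
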